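/- Let n₁, n₂ ≥ 2 be integers and α₁, α₂ > 0 real numbers with α₁^{n₁} · α₂^{n₂} = 1. Then √((n₁-1)²/α₁² + (n₂-1)²/α₂²) ≥ √(n₁+n₂) · (((n₁-1)/√n₁)^{n₁} · ((n₂-1)/√n₂)^{n₂})^{1/(n₁+n₂)}, with equality if and only if α₁ = [((n₁-1)√n₂/(√n₁(n₂-1)))^{n₂}]^{1/(n₁+n₂)} and α₂ = [((n₂-1)√n₁/(√n₂(n₁-1)))^{n₁}]^{1/(n₁+n₂)}. -/

import Mathlib

open Real
lemma amgm2 {x y w₁ w₂ : ℝ} (hx : 0 < x) (hy : 0 < y) (hw₁ : 0 < w₁) (hw₂ : 0 < w₂)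
    (hw : w₁ + w₂ = 1) :
    x ^ w₁ * y ^ w₂ ≤ w₁ * x + w₂ * y ∧
      (x ^ w₁ * y ^ w₂ = w₁ * x + w₂ * y ↔ x = y) := by
  rcases eq_or_ne x y with rfl | hxy
  · have h : x ^ w₁ * x ^ w₂ = x := by
      rw [← Real.rpow_add hx, hw, Real.rpow_one]
    have h2 : w₁ * x + w₂ * x = x := by rw [← add_mul, hw, one_mul]
    rw [h, h2]
    exact ⟨le_rfl, by simp⟩
  · have hpos : 0 < w₁ * x + w₂ * y := by positivity
    have key : x ^ w₁ * y ^ w₂ < w₁ * x + w₂ * y := by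
      have hcc := strictConcaveOn_log_Ioi.2 (Set.mem_Ioi.2 hx) (Set.mem_Ioi.2 hy) hxy hw₁ hw₂ hw
      simp only [smul_eq_mul] at hcc
      calc x ^ w₁ * y ^ w₂ = Real.exp (w₁ * Real.log x + w₂ * Real.log y) := by
            rw [Real.rpow_def_of_pos hx, Real.rpow_def_of_pos hy, ← Real.exp_add]; ring_nf
        _ < Real.exp (Real.log (w₁ * x + w₂ * y)) := Real.exp_lt_exp.2 hcc
        _ = w₁ * x + w₂ * y := Real.exp_log hpos
    exact ⟨key.le, ⟨fun h => absurd h key.ne, fun h => absurd h hxy⟩⟩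

theorem stmt_0 (n₁ n₂ : ℕ) (hn₁ : 2 ≤ n₁) (hn₂ : 2 ≤ n₂)
    (α₁ α₂ : ℝ) (hα₁ : 0 < α₁) (hα₂ : 0 < α₂)
    (hconstraint : α₁ ^ n₁ * α₂ ^ n₂ = 1) :
    Real.sqrt (((n₁ : ℝ) - 1) ^ 2 / α₁ ^ 2 + ((n₂ : ℝ) - 1) ^ 2 / α₂ ^ 2)
      ≥ Real.sqrt ((n₁ : ℝ) + (n₂ : ℝ)) *
        ((((n₁ : ℝ) - 1) / Real.sqrt n₁) ^ n₁ *
          (((n₂ : ℝ) - 1) / Real.sqrt n₂) ^ n₂) ^ (1 / ((n₁ : ℝ) + (n₂ : ℝ))) ∧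
    (Real.sqrt (((n₁ : ℝ) - 1) ^ 2 / α₁ ^ 2 + ((n₂ : ℝ) - 1) ^ 2 / α₂ ^ 2)
      = Real.sqrt ((n₁ : ℝ) + (n₂ : ℝ)) *
        ((((n₁ : ℝ) - 1) / Real.sqrt n₁) ^ n₁ *
          (((n₂ : ℝ) - 1) / Real.sqrt n₂) ^ n₂) ^ (1 / ((n₁ : ℝ) + (n₂ : ℝ)))
      ↔ (α₁ = ((((n₁ : ℝ) - 1) * Real.sqrt n₂ /
              (Real.sqrt n₁ * ((n₂ : ℝ) - 1))) ^ n₂) ^ (1 / ((n₁ : ℝ) + (n₂ : ℝ)))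
        ∧ α₂ = ((((n₂ : ℝ) - 1) * Real.sqrt n₁ /
              (Real.sqrt n₂ * ((n₁ : ℝ) - 1))) ^ n₁) ^ (1 / ((n₁ : ℝ) + (n₂ : ℝ))))) := by
  have h2₁ : (2:ℝ) ≤ (n₁:ℝ) := by exact_mod_cast hn₁
  have h2₂ : (2:ℝ) ≤ (n₂:ℝ) := by exact_mod_cast hn₂
  have hn₁p : (0:ℝ) < (n₁:ℝ) := by linarith
  have hn₂p : (0:ℝ) < (n₂:ℝ) := by linarith
  have hs₁ : 0 < Real.sqrt n₁ := Real.sqrt_pos.2 hn₁p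
  have hs₂ : 0 < Real.sqrt n₂ := Real.sqrt_pos.2 hn₂p
  have hsq₁ : Real.sqrt n₁ ^ 2 = (n₁:ℝ) := Real.sq_sqrt hn₁p.le
  have hsq₂ : Real.sqrt n₂ ^ 2 = (n₂:ℝ) := Real.sq_sqrt hn₂p.le
  set a₁ := (n₁:ℝ) - 1 with ha₁def
  set a₂ := (n₂:ℝ) - 1 with ha₂def
  set s₁ := Real.sqrt n₁ with hs₁def
  set s₂ := Real.sqrt n₂ with hs₂def
  have ha₁ : (0:ℝ) < a₁ := by rw [ha₁def]; linarith
  have ha₂ : (0:ℝ) < a₂ := by rw [ha₂def]; linarith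
  set N := (n₁:ℝ) + (n₂:ℝ) with hNdef
  have hNp : (0:ℝ) < N := by rw [hNdef]; linarith
  have hNcast : ((n₁ + n₂ : ℕ):ℝ) = N := by rw [hNdef]; push_cast; ring
  set G := (a₁ / s₁) ^ n₁ * (a₂ / s₂) ^ n₂ with hGdef
  have hGp : 0 < G := by positivity
  set S := a₁ ^ 2 / α₁ ^ 2 + a₂ ^ 2 / α₂ ^ 2 with hSdef
  have hSp : (0:ℝ) ≤ S := by positivity
  set x := a₁ ^ 2 / ((n₁:ℝ) * α₁ ^ 2) with hxdef
  set y := a₂ ^ 2 / ((n₂:ℝ) * α₂ ^ 2) with hydef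
  have hxp : 0 < x := by positivity
  have hyp : 0 < y := by positivity
  have hw₁ : 0 < (n₁:ℝ)/N := by positivity
  have hw₂ : 0 < (n₂:ℝ)/N := by positivity
  have hwsum : (n₁:ℝ)/N + (n₂:ℝ)/N = 1 := by
    rw [← add_div, hNdef, div_self hNp.ne']
  obtain ⟨hle, heq⟩ := amgm2 hxp hyp hw₁ hw₂ hwsum
  -- x^n₁ * y^n₂ = G^2
  have hxn : x ^ n₁ * y ^ n₂ = G ^ 2 := by
    have e1 : x = (a₁ / s₁ / α₁) ^ 2 := by rw [hxdef, ← hsq₁]; ring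
    have e2 : y = (a₂ / s₂ / α₂) ^ 2 := by rw [hydef, ← hsq₂]; ring
    have hinner : (a₁ / s₁ / α₁) ^ n₁ * (a₂ / s₂ / α₂) ^ n₂ = G := by
      rw [div_pow (a₁ / s₁) α₁, div_pow (a₂ / s₂) α₂, div_mul_div_comm,
        hconstraint, div_one]
    rw [e1, e2, ← pow_mul, ← pow_mul, mul_comm 2 n₁, mul_comm 2 n₂, pow_mul, pow_mul,
      ← mul_pow, hinner]
  have ex : x ^ ((n₁:ℝ)/N) = (x ^ n₁) ^ (N⁻¹ : ℝ) := by
    rw [div_eq_mul_inv, Real.rpow_mul hxp.le, Real.rpow_natCast]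
  have ey : y ^ ((n₂:ℝ)/N) = (y ^ n₂) ^ (N⁻¹ : ℝ) := by
    rw [div_eq_mul_inv, Real.rpow_mul hyp.le, Real.rpow_natCast]
  have hrpow : x ^ ((n₁:ℝ)/N) * y ^ ((n₂:ℝ)/N) = (G ^ (1/N)) ^ 2 := by
    rw [ex, ey, ← Real.mul_rpow (pow_nonneg hxp.le _) (pow_nonneg hyp.le _), hxn,
      ← Real.rpow_natCast G 2, ← Real.rpow_mul hGp.le,
      ← Real.rpow_natCast (G ^ (1/N)) 2, ← Real.rpow_mul hGp.le]
    norm_num [mul_comm]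
  have hSw : (n₁:ℝ)/N * x + (n₂:ℝ)/N * y = S / N := by
    rw [hxdef, hydef, hSdef]
    field_simp
  rw [hrpow, hSw] at hle heq
  set M := Real.sqrt N * G ^ (1/N) with hMdef
  have hMp : (0:ℝ) ≤ M := by positivity
  have hM2 : M ^ 2 = N * (G ^ (1/N)) ^ 2 := by
    rw [hMdef, mul_pow, Real.sq_sqrt hNp.le]
  have hMS : M ^ 2 ≤ S := by
    rw [hM2]
    calc N * (G ^ (1/N)) ^ 2 ≤ N * (S / N) := mul_le_mul_of_nonneg_left hle hNp.le
      _ = S := by field_simp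
  have hMsqrt : M = Real.sqrt (M ^ 2) := (Real.sqrt_sq hMp).symm
  constructor
  · rw [ge_iff_le, hMsqrt]
    exact Real.sqrt_le_sqrt hMS
  -- equality case
  have heqS : Real.sqrt S = M ↔ x = y := by
    rw [hMsqrt, Real.sqrt_inj hSp (sq_nonneg M), hM2, ← heq, eq_div_iff hNp.ne']
    constructor
    · intro h; linarith
    · intro h; linarith
  rw [heqS]
  -- characterize x = y
  set c := a₁ * s₂ / (s₁ * a₂) with hcdef
  set r := a₂ * s₁ / (s₂ * a₁) with hrdef
  have hcp : 0 < c := by positivity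
  have hrp : 0 < r := by positivity
  have hrc : r * c = 1 := by
    rw [hrdef, hcdef, div_mul_div_comm, div_eq_one_iff_eq (by positivity)]
    ring
  have hxy_iff : x = y ↔ α₂ = r * α₁ := by
    constructor
    · intro h
      rw [hxdef, hydef] at h
      have h' : a₁ ^ 2 * ((n₂:ℝ) * α₂ ^ 2) = a₂ ^ 2 * ((n₁:ℝ) * α₁ ^ 2) :=
        (div_eq_div_iff (by positivity) (by positivity)).1 h
      have hsq : (a₁ * s₂ * α₂) ^ 2 = (a₂ * s₁ * α₁) ^ 2 := by
        rw [mul_pow, mul_pow, mul_pow, mul_pow, hsq₁, hsq₂]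
        linear_combination h'
      have h3 : a₁ * s₂ * α₂ = a₂ * s₁ * α₁ := by
        have h4 : (a₁ * s₂ * α₂ - a₂ * s₁ * α₁) * (a₁ * s₂ * α₂ + a₂ * s₁ * α₁) = 0 := by
          linear_combination hsq
        have hp1 : 0 < a₁ * s₂ * α₂ := by positivity
        have hp2 : 0 < a₂ * s₁ * α₁ := by positivity
        rcases mul_eq_zero.1 h4 with h5 | h5
        · linarith
        · linarith
      rw [hrdef, div_mul_eq_mul_div, eq_div_iff (by positivity)]
      linear_combination h3
    · intro h
      rw [hxdef, hydef]
      rw [div_eq_div_iff (by positivity) (by positivity)]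
      rw [h, hrdef, ← hsq₁, ← hsq₂]
      field_simp
  rw [hxy_iff]
  -- final characterization via rpow
  have hcr : c = r⁻¹ := eq_inv_of_mul_eq_one_left (by linear_combination hrc)
  have hc_pow : (c ^ n₂ : ℝ) ^ ((1:ℝ)/N) = r ^ (-(n₂:ℝ)/N) := by
    rw [hcr, ← Real.rpow_natCast r⁻¹ n₂, Real.inv_rpow hrp.le, ← Real.rpow_neg hrp.le,
      ← Real.rpow_mul hrp.le]
    congr 1
    ring
  have hr_pow : (r ^ n₁ : ℝ) ^ ((1:ℝ)/N) = r ^ ((n₁:ℝ)/N) := by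
    rw [← Real.rpow_natCast r n₁, ← Real.rpow_mul hrp.le]
    congr 1
    ring
  have hratio : r ^ ((n₁:ℝ)/N) = r * r ^ (-(n₂:ℝ)/N) := by
    nth_rewrite 2 [← Real.rpow_one r]
    rw [← Real.rpow_add hrp]
    congr 1
    rw [hNdef]
    field_simp
    ring
  constructor
  · intro h
    have hcon2 : α₁ ^ (n₁ + n₂) = c ^ n₂ := by
      have h1 : α₁ ^ (n₁ + n₂) * r ^ n₂ = 1 := by
        rw [pow_add]
        calc α₁ ^ n₁ * α₁ ^ n₂ * r ^ n₂ = α₁ ^ n₁ * (r * α₁) ^ n₂ := by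
              rw [mul_pow]; ring
          _ = 1 := by rw [← h, hconstraint]
      calc α₁ ^ (n₁ + n₂) = α₁ ^ (n₁ + n₂) * (r ^ n₂ * c ^ n₂) := by
            rw [← mul_pow, hrc, one_pow, mul_one]
        _ = (α₁ ^ (n₁ + n₂) * r ^ n₂) * c ^ n₂ := by ring
        _ = c ^ n₂ := by rw [h1, one_mul]
    have hcon3 : α₂ ^ (n₁ + n₂) = r ^ n₁ := by
      rw [h, mul_pow, hcon2, pow_add, mul_assoc, ← mul_pow, hrc, one_pow, mul_one]
    have key1 : ∀ t : ℝ, 0 < t → (t ^ (n₁ + n₂) : ℝ) ^ ((1:ℝ)/N) = t := by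
      intro t ht
      rw [← Real.rpow_natCast t (n₁ + n₂), ← Real.rpow_mul ht.le, hNcast,
        mul_one_div, div_self hNp.ne', Real.rpow_one]
    constructor
    · rw [← hcon2, key1 α₁ hα₁]
    · rw [← hcon3, key1 α₂ hα₂]
  · rintro ⟨h1, h2⟩
    rw [h1, h2, hc_pow, hr_pow, hratio]
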